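/- Let L be a first-order language and let M and N be nonempty L-structures, each of which is pointwise definable (every element is definable by an L-formula without parameters). If M and N are elementarily equivalent (they satisfy exactly the same L-sentences), then M and N are isomorphic as L-structures. -/

import Mathlib

open FirstOrder

namespace PointwiseDefAux

open FirstOrder.Language

variable {L : Language} {M N : Type*} [L.Structure M] [L.Structure N]

/-- Quantify universally over the variables sent to `γ` by `f`. -/
noncomputable def fAlls {α β γ : Type*} [Finite γ] (f : α → β ⊕ γ) (φ : L.Formula α) :
    L.Formula β :=
  (φ.relabel f).iAlls γ

/-- Quantify existentially over the variables sent to `γ` by `f`. -/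
noncomputable def fExs {α β γ : Type*} [Finite γ] (f : α → β ⊕ γ) (φ : L.Formula α) :
    L.Formula β :=
  (φ.relabel f).iExs γ

lemma realize_fAlls {α β γ : Type*} [Finite γ] {f : α → β ⊕ γ} {φ : L.Formula α}
    {v : β → M} : (fAlls f φ).Realize v ↔ ∀ i : γ → M, φ.Realize (fun a => Sum.elim v i (f a)) := by
  rw [fAlls, Formula.realize_iAlls]
  simp only [Formula.realize_relabel, Function.comp_def]

lemma realize_fExs {α β γ : Type*} [Finite γ] {f : α → β ⊕ γ} {φ : L.Formula α}
    {v : β → M} : (fExs f φ).Realize v ↔ ∃ i : γ → M, φ.Realize (fun a => Sum.elim v i (f a)) := by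
  rw [fExs, Formula.realize_iExs]
  simp only [Formula.realize_relabel, Function.comp_def]

/-- The sentence asserting that `φ` has at most one realization. -/
noncomputable def uniqSent (φ : L.Formula (Fin 1)) : L.Sentence :=
  fAlls (Sum.inr : Fin 2 → Empty ⊕ Fin 2)
    (((φ.relabel (fun _ => (0 : Fin 2))) ⊓ (φ.relabel (fun _ => (1 : Fin 2)))).imp
    (Term.equal (Term.var 0) (Term.var 1)))

lemma realize_uniqSent_iff {φ : L.Formula (Fin 1)} :
    (M ⊨ uniqSent φ) ↔ ∀ y z : M,
      φ.Realize (fun _ => y) → φ.Realize (fun _ => z) → y = z := by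
  simp only [uniqSent, Sentence.Realize, realize_fAlls, Formula.realize_imp,
    Formula.realize_inf, Formula.realize_relabel, Formula.realize_equal, Term.realize_var]
  constructor
  · intro h y z hy hz
    have := h ![y, z]
    simp only [Function.comp_def] at this
    exact this ⟨hy, hz⟩
  · intro h i hyz
    exact h _ _ hyz.1 hyz.2

lemma defmap (h : ∀ φ : L.Sentence, M ⊨ φ ↔ N ⊨ φ)
    (hM : ∀ a : M, ∃ φ : L.Formula (Fin 1),
      ∀ x : M, φ.Realize (fun _ => x) ↔ x = a) :
    ∀ a : M, ∃ b : N, ∀ ψ : L.Formula (Fin 1),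
      (∀ x : M, ψ.Realize (fun _ => x) ↔ x = a) →
      ∀ y : N, ψ.Realize (fun _ => y) ↔ y = b := by
  intro a
  obtain ⟨φ, hφ⟩ := hM a
  have huniq : ∀ ψ : L.Formula (Fin 1),
      (∀ x : M, ψ.Realize (fun _ => x) ↔ x = a) →
      ∀ y z : N, ψ.Realize (fun _ => y) → ψ.Realize (fun _ => z) → y = z := by
    intro ψ hψ
    refine realize_uniqSent_iff.mp ((h _).mp (realize_uniqSent_iff.mpr ?_))
    intro y z hy hz
    rw [(hψ y).mp hy, (hψ z).mp hz]
  have hex : ∃ b : N, φ.Realize (fun _ => b) := by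
    have hMex : M ⊨ fExs (Sum.inr : Fin 1 → Empty ⊕ Fin 1) φ := by
      rw [Sentence.Realize, realize_fExs]
      exact ⟨fun _ => a, (hφ a).mpr rfl⟩
    have hNex := (h _).mp hMex
    rw [Sentence.Realize, realize_fExs] at hNex
    obtain ⟨i, hi⟩ := hNex
    have hieq : (fun a : Fin 1 => Sum.elim (default : Empty → N) i (Sum.inr a)) =
        (fun _ : Fin 1 => i 0) := by
      funext j; rw [Sum.elim_inr, Subsingleton.elim j 0]
    rw [hieq] at hi
    exact ⟨i 0, hi⟩
  obtain ⟨b, hb⟩ := hex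
  refine ⟨b, fun ψ hψ => ?_⟩
  have hψb : ψ.Realize (fun _ => b : Fin 1 → N) := by
    have hMex : M ⊨ fExs (Sum.inr : Fin 1 → Empty ⊕ Fin 1) (φ ⊓ ψ) := by
      rw [Sentence.Realize, realize_fExs]
      exact ⟨fun _ => a, (Formula.realize_inf).mpr ⟨(hφ a).mpr rfl, (hψ a).mpr rfl⟩⟩
    have hNex := (h _).mp hMex
    rw [Sentence.Realize, realize_fExs] at hNex
    obtain ⟨i, hi⟩ := hNex
    rw [Formula.realize_inf] at hi
    have hieq : (fun x : Fin 1 => Sum.elim (default : Empty → N) i (Sum.inr x)) =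
        (fun _ : Fin 1 => i 0) := by funext j; simp [Subsingleton.elim j 0]
    rw [hieq] at hi
    have hib : i 0 = b := huniq φ hφ _ _ hi.1 hb
    rw [hib] at hi
    exact hi.2
  intro y
  exact ⟨fun hy => huniq ψ hψ y b hy hψb, fun hy => hy ▸ hψb⟩

lemma realize_chi {n : ℕ} (ψ : L.Formula (Fin n)) (φs : Fin n → L.Formula (Fin 1))
    (w : Fin n → M) :
    (ψ ⊓ BoundedFormula.iInf
        (fun i : Fin n => (φs i).relabel (fun _ => i))).Realize w ↔
      (ψ.Realize w ∧ ∀ i, (φs i).Realize (fun _ => w i)) := by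
  rw [Formula.realize_inf]
  apply and_congr_right'
  show BoundedFormula.Realize _ w default ↔ _
  rw [BoundedFormula.realize_iInf]
  refine forall_congr' fun i => ?_
  show Formula.Realize ((φs i).relabel (fun _ => i)) w ↔ _
  rw [Formula.realize_relabel]
  exact Iff.rfl

end PointwiseDefAux

/-- Two nonempty pointwise definable structures (every element definable without
parameters) that are elementarily equivalent are isomorphic. -/
theorem pointwise_definable_elementarilyEquivalent_iso
    {L : Language} {M N : Type*} [L.Structure M] [L.Structure N]
    [Nonempty M] [Nonempty N]
    (hM : ∀ a : M, ∃ φ : L.Formula (Fin 1),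
      ∀ x : M, φ.Realize (fun _ => x) ↔ x = a)
    (hN : ∀ b : N, ∃ φ : L.Formula (Fin 1),
      ∀ y : N, φ.Realize (fun _ => y) ↔ y = b)
    (heq : M ≅[L] N) :
    Nonempty (M ≃[L] N) := by
  classical
  have hsent : ∀ φ : FirstOrder.Language.Sentence L, M ⊨ φ ↔ N ⊨ φ :=
    FirstOrder.Language.elementarilyEquivalent_iff.1 heq
  choose f hf using PointwiseDefAux.defmap hsent hM
  choose g hg using PointwiseDefAux.defmap (fun φ => (hsent φ).symm) hN
  have hgf : ∀ a : M, g (f a) = a := by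
    intro a
    obtain ⟨φ, hφ⟩ := hM a
    exact ((hg (f a) φ (hf a φ hφ) a).mp ((hφ a).mpr rfl)).symm
  have hfg : ∀ b : N, f (g b) = b := by
    intro b
    obtain ⟨φ, hφ⟩ := hN b
    exact ((hf (g b) φ (hg b φ hφ) b).mp ((hφ b).mpr rfl)).symm
  have trans : ∀ {n : ℕ} (ψ : L.Formula (Fin n)) (x : Fin n → M),
      ψ.Realize x ↔ ψ.Realize (f ∘ x) := by
    intro n ψ x
    set φs : Fin n → L.Formula (Fin 1) := fun i => Classical.choose (hM (x i)) with hφs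
    have hφspec : ∀ i, ∀ z : M, (φs i).Realize (fun _ => z) ↔ z = x i :=
      fun i => Classical.choose_spec (hM (x i))
    have hφN : ∀ i, ∀ y : N, (φs i).Realize (fun _ => y) ↔ y = f (x i) :=
      fun i => hf (x i) (φs i) (hφspec i)
    set χ : L.Formula (Fin n) :=
      ψ ⊓ FirstOrder.Language.BoundedFormula.iInf
        (fun i : Fin n => (φs i).relabel (fun _ => i)) with hχ
    have hrealizeM : ∀ w : Fin n → M,
        χ.Realize w ↔ (ψ.Realize w ∧ ∀ i, (φs i).Realize (fun _ => w i)) :=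
      fun w => hχ ▸ PointwiseDefAux.realize_chi ψ φs w
    have hrealizeN : ∀ w : Fin n → N,
        χ.Realize w ↔ (ψ.Realize w ∧ ∀ i, (φs i).Realize (fun _ => w i)) :=
      fun w => hχ ▸ PointwiseDefAux.realize_chi ψ φs w
    have hMside : (M ⊨ PointwiseDefAux.fExs (Sum.inr : Fin n → Empty ⊕ Fin n) χ) ↔ ψ.Realize x := by
      rw [FirstOrder.Language.Sentence.Realize, PointwiseDefAux.realize_fExs]
      constructor
      · rintro ⟨w, hw⟩
        rw [hrealizeM _] at hw
        obtain ⟨h1, h2⟩ := hw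
        have : (fun a => Sum.elim (default : Empty → M) w (Sum.inr a)) = x := by
          funext i
          exact (hφspec i _).mp (h2 i)
        rwa [this] at h1
      · intro hx
        refine ⟨x, (hrealizeM _).mpr ⟨hx, fun i => (hφspec i _).mpr rfl⟩⟩
    have hNside : (N ⊨ PointwiseDefAux.fExs (Sum.inr : Fin n → Empty ⊕ Fin n) χ) ↔ ψ.Realize (f ∘ x) := by
      rw [FirstOrder.Language.Sentence.Realize, PointwiseDefAux.realize_fExs]
      constructor
      · rintro ⟨w, hw⟩
        rw [hrealizeN _] at hw
        obtain ⟨h1, h2⟩ := hw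
        have : (fun a => Sum.elim (default : Empty → N) w (Sum.inr a)) = f ∘ x := by
          funext i
          exact (hφN i _).mp (h2 i)
        rwa [this] at h1
      · intro hx
        refine ⟨f ∘ x, (hrealizeN _).mpr ⟨hx, fun i => (hφN i _).mpr rfl⟩⟩
    exact hMside.symm.trans ((hsent _).trans hNside)
  refine ⟨⟨⟨f, g, hgf, hfg⟩, ?_, ?_⟩⟩
  · intro n F x
    have := trans (FirstOrder.Language.Term.equal
        (FirstOrder.Language.Term.func F (fun i => FirstOrder.Language.Term.var i.castSucc))
        (FirstOrder.Language.Term.var (Fin.last n))) (Fin.snoc x (FirstOrder.Language.Structure.funMap F x))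
    simp only [FirstOrder.Language.Formula.realize_equal, FirstOrder.Language.Term.realize_func,
      FirstOrder.Language.Term.realize_var, Function.comp_apply, Fin.snoc_castSucc,
      Fin.snoc_last, Function.comp_def] at this
    exact (this.mp trivial).symm
  · intro n r x
    have := trans (r.formula (fun i => FirstOrder.Language.Term.var i)) x
    simp only [FirstOrder.Language.Formula.realize_rel,
      FirstOrder.Language.Term.realize_var, Function.comp_apply, Function.comp_def] at this
    exact this.symm
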